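/- Let v_0, ..., v_d ∈ R^d be vertices of a simplex containing the origin in its interior, and for n_0, ..., n_d ≥ 2 define C_i = {v_i, -v_i, -2v_i, ..., -(n_i-1)v_i}. Then C = {C_0, ..., C_d} is a centered colorful configuration whose number of hitting simplices is exactly 1 + (n_0-1)(n_1-1)···(n_d-1). -/
import Mathlib


open Finset

lemma mem_convexHull_fintype' {ι : Type*} [Fintype ι] {E : Type*} [AddCommGroup E] [Module ℝ E]
    (w : ι → E) (x : E) :
    x ∈ convexHull ℝ (Set.range w) ↔
      ∃ μ : ι → ℝ, (∀ i, 0 ≤ μ i) ∧ ∑ i, μ i = 1 ∧ ∑ i, μ i • w i = x := by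
  classical
  rw [convexHull_range_eq_exists_affineCombination]
  constructor
  · rintro ⟨s, wt, h0, h1, rfl⟩
    refine ⟨fun i => if i ∈ s then wt i else 0, fun i => ?_, ?_, ?_⟩
    · dsimp only; split
      · exact h0 _ ‹_›
      · exact le_refl _
    · simp only
      rw [Finset.sum_ite_mem, Finset.univ_inter, h1]
    · simp only
      rw [Finset.affineCombination_eq_linear_combination _ _ _ h1]
      simp only [ite_smul, zero_smul]
      rw [Finset.sum_ite_mem, Finset.univ_inter]
  · rintro ⟨μ, h0, h1, rfl⟩
    exact ⟨Finset.univ, μ, fun i _ => h0 i, h1, by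
      rw [Finset.affineCombination_eq_linear_combination _ _ _ h1]⟩


/-- The extremal example: with `v 0, …, v d` the vertices of a simplex containing the
origin in its interior and `C i = {v i, -v i, -2 v i, …, -(n i - 1) v i}`, the
configuration is centered and has exactly `1 + ∏ (n i - 1)` hitting simplices. -/
theorem extremal_example (d : ℕ) (v : Fin (d + 1) → EuclideanSpace ℝ (Fin d))
    (hv : AffineIndependent ℝ v)
    (h0 : (0 : EuclideanSpace ℝ (Fin d)) ∈ interior (convexHull ℝ (Set.range v)))
    (n : Fin (d + 1) → ℕ) (hn : ∀ i, 2 ≤ n i)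
    (pts : (i : Fin (d + 1)) → Fin (n i) → EuclideanSpace ℝ (Fin d))
    (hpts : ∀ i (j : Fin (n i)),
      pts i j = if (j : ℕ) = 0 then v i else (-(j : ℕ) : ℝ) • v i) :
    (∀ i, (0 : EuclideanSpace ℝ (Fin d)) ∈
        intrinsicInterior ℝ (convexHull ℝ (Set.range (pts i)))) ∧
    Nat.card {α : (i : Fin (d + 1)) → Fin (n i) //
        affineSpan ℝ (Set.range fun i => pts i (α i)) = ⊤ ∧
        (0 : EuclideanSpace ℝ (Fin d)) ∈ convexHull ℝ (Set.range fun i => pts i (α i))}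
      = 1 + ∏ i, (n i - 1) := by
  classical
  -- span of the original simplex
  have hspan : affineSpan ℝ (Set.range v) = ⊤ := by
    rw [hv.affineSpan_eq_top_iff_card_eq_finrank_add_one]
    simp [finrank_euclideanSpace]
  let b : AffineBasis (Fin (d + 1)) ℝ (EuclideanSpace ℝ (Fin d)) := ⟨v, hv, hspan⟩
  let lam : Fin (d + 1) → ℝ := fun i => b.coord i 0
  have hbv : ⇑b = v := rfl
  have hlpos : ∀ i, 0 < lam i := by
    have h0' : (0 : EuclideanSpace ℝ (Fin d)) ∈ interior (convexHull ℝ (Set.range ⇑b)) := by rw [hbv]; exact h0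
    rw [b.interior_convexHull] at h0'
    exact h0'
  have hlsum : ∑ i, lam i = 1 := b.sum_coord_apply_eq_one 0
  have hlcomb : ∑ i, lam i • v i = 0 := by
    have := b.linear_combination_coord_eq_self 0
    rw [hbv] at this
    exact this
  -- uniqueness of linear dependences among the vᵢ
  have huniq : ∀ t : Fin (d + 1) → ℝ, ∑ i, t i • v i = 0 →
      ∀ i, t i = (∑ j, t j) * lam i := by
    intro t ht i
    have key := affineIndependent_iff.mp hv Finset.univ
      (fun j => t j - (∑ k, t k) * lam j) ?_ ?_ i (Finset.mem_univ i)
    · simp only [sub_eq_zero] at key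
      exact key
    · rw [Finset.sum_sub_distrib, ← Finset.mul_sum, hlsum, mul_one, sub_self]
    · have expand : ∑ j, (t j - (∑ k, t k) * lam j) • v j
          = (∑ j, t j • v j) - (∑ k, t k) • ∑ j, lam j • v j := by
        rw [Finset.smul_sum, ← Finset.sum_sub_distrib]
        congr 1; ext j; rw [sub_smul, mul_smul]
      rw [expand, ht, hlcomb, smul_zero, sub_zero]
  have hcoef : ∀ (α : (i : Fin (d + 1)) → Fin (n i)) i,
      pts i (α i) = (if ((α i : ℕ)) = 0 then (1 : ℝ) else -((α i : ℕ) : ℝ)) • v i := by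
    intro α i
    rw [hpts i (α i)]
    split <;> simp
  have hchar : ∀ (α : (i : Fin (d + 1)) → Fin (n i)),
      (affineSpan ℝ (Set.range fun i => pts i (α i)) = ⊤ ∧
        (0 : EuclideanSpace ℝ (Fin d)) ∈ convexHull ℝ (Set.range fun i => pts i (α i))) ↔
      ((∀ i, (α i : ℕ) = 0) ∨ (∀ i, (α i : ℕ) ≠ 0)) := by
    intro α
    set c : Fin (d + 1) → ℝ := fun i => if ((α i : ℕ)) = 0 then (1 : ℝ) else -((α i : ℕ) : ℝ)
      with hc
    have hcv : ∀ i, pts i (α i) = c i • v i := hcoef α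
    have hcne : ∀ i, c i ≠ 0 := by
      intro i
      rw [hc]; dsimp only; split
      · norm_num
      · rename_i h
        intro h'
        rw [neg_eq_zero] at h'
        exact h (by exact_mod_cast h')
    constructor
    · rintro ⟨hsp, hmem⟩
      by_contra hcon
      push_neg at hcon
      obtain ⟨h1, h2⟩ := hcon
      obtain ⟨j0, hj0⟩ := h1
      obtain ⟨i0, hi0⟩ := h2
      rw [mem_convexHull_fintype'] at hmem
      obtain ⟨μ, hμ0, hμ1, hμc⟩ := hmem
      have ht : ∑ i, (μ i * c i) • v i = 0 := by
        have : ∀ i, (μ i * c i) • v i = μ i • pts i (α i) := fun i => by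
          rw [hcv i, smul_smul]
        rw [Finset.sum_congr rfl fun i _ => this i]
        exact hμc
      have hti := huniq (fun i => μ i * c i) ht
      set S := ∑ j, μ j * c j with hS
      have hci0 : c i0 = 1 := by rw [hc]; simp [hi0]
      have hcj0 : c j0 < 0 := by
        rw [hc]; dsimp only
        rw [if_neg hj0]
        exact neg_neg_of_pos (by exact_mod_cast Nat.pos_of_ne_zero hj0)
      have e1 : μ i0 * c i0 = S * lam i0 := hti i0
      have e2 : μ j0 * c j0 = S * lam j0 := hti j0
      have hSge : 0 ≤ S := by nlinarith [hμ0 i0, hlpos i0, e1, hci0]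
      have hSle : S ≤ 0 := by nlinarith [hμ0 j0, hlpos j0, e2, hcj0, mul_nonpos_of_nonneg_of_nonpos (hμ0 j0) hcj0.le]
      have hS0 : S = 0 := le_antisymm hSle hSge
      have hμz : ∀ i, μ i = 0 := by
        intro i
        have := hti i
        rw [hS0, zero_mul] at this
        exact (mul_eq_zero.mp this).resolve_right (hcne i)
      rw [Finset.sum_congr rfl fun i _ => hμz i] at hμ1
      simp at hμ1
    · rintro (hall0 | hne)
      · have hveq : (fun i => pts i (α i)) = v := funext fun i => by
          rw [hcv i, hc]; simp [hall0 i]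
        rw [hveq]
        exact ⟨hspan, interior_subset h0⟩
      · have hcneg : ∀ i, c i < 0 := by
          intro i
          rw [hc]; dsimp only
          rw [if_neg (hne i)]
          exact neg_neg_of_pos (by exact_mod_cast Nat.pos_of_ne_zero (hne i))
        set wt : Fin (d + 1) → ℝ := fun i => lam i / (-(c i)) with hwt
        have hw : ∀ i, 0 < wt i := fun i => div_pos (hlpos i) (by linarith [hcneg i])
        have hmass := Finset.univ.centerMass_mem_convexHull (w := wt)
          (z := fun i => pts i (α i)) (fun i _ => (hw i).le)
          (Finset.sum_pos (fun i _ => hw i) Finset.univ_nonempty)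
          (fun i _ => Set.mem_range_self i)
        have hcm : Finset.univ.centerMass wt (fun i => pts i (α i)) = 0 := by
          rw [Finset.centerMass]
          have hsum : ∑ i, wt i • pts i (α i) = 0 := by
            have step : ∀ i, wt i • pts i (α i) = -(lam i • v i) := by
              intro i
              rw [hcv i, smul_smul, ← neg_smul]
              congr 1
              rw [hwt]; dsimp only
              rw [div_mul_eq_mul_div, div_neg, mul_div_assoc, div_self (hcne i), mul_one]
            rw [Finset.sum_congr rfl fun i _ => step i, Finset.sum_neg_distrib, hlcomb,
              neg_zero]
          rw [hsum, smul_zero]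
        have hmem0 : (0 : EuclideanSpace ℝ (Fin d)) ∈
            convexHull ℝ (Set.range fun i => pts i (α i)) := hcm ▸ hmass
        have h0A : (0 : EuclideanSpace ℝ (Fin d)) ∈
            affineSpan ℝ (Set.range fun i => pts i (α i)) :=
          convexHull_subset_affineSpan _ hmem0
        have hvA : ∀ i, v i ∈ affineSpan ℝ (Set.range fun i => pts i (α i)) := by
          intro i
          have hp : pts i (α i) ∈ affineSpan ℝ (Set.range fun i => pts i (α i)) :=
            subset_affineSpan ℝ _ (Set.mem_range_self i)
          have hmem := AffineSubspace.smul_vsub_vadd_mem _ ((c i)⁻¹) hp h0A h0A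
          simpa [hcv i, vsub_eq_sub, vadd_eq_add, smul_smul,
            inv_mul_cancel₀ (hcne i)] using hmem
        refine ⟨?_, hmem0⟩
        rw [eq_top_iff, ← hspan, affineSpan_le]
        rintro x ⟨i, rfl⟩
        exact hvA i
  constructor
  · -- the configuration is centered
    intro i
    by_cases hvi : v i = 0
    · have hall : ∀ j, pts i j = 0 := fun j => by rw [hpts i j]; split <;> simp [hvi]
      have hinst : Nonempty (Fin (n i)) := ⟨⟨0, by have := hn i; omega⟩⟩
      have hr : pts i = fun _ => (0 : EuclideanSpace ℝ (Fin d)) := funext hall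
      rw [hr, Set.range_const, convexHull_singleton, intrinsicInterior_singleton]
      rfl
    · set S := convexHull ℝ (Set.range (pts i)) with hSdef
      have hseg : segment ℝ (-(v i)) (v i) ⊆ S := by
        apply (convex_convexHull ℝ _).segment_subset
        · apply subset_convexHull
          refine ⟨⟨1, by have := hn i; omega⟩, ?_⟩
          rw [hpts]; norm_num
        · apply subset_convexHull
          refine ⟨⟨0, by have := hn i; omega⟩, ?_⟩
          rw [hpts]; simp
      have hmemseg : ∀ t : ℝ, |t| ≤ 1 → t • v i ∈ segment ℝ (-(v i)) (v i) := by
        intro t htle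
        have h1 := abs_le.mp htle
        exact ⟨(1 - t) / 2, (1 + t) / 2, by linarith [h1.2], by linarith [h1.1],
          by ring, by module⟩
      have h0S : (0 : EuclideanSpace ℝ (Fin d)) ∈ S := by
        have := hseg (hmemseg 0 (by simp))
        simpa using this
      have hsub : S ⊆ (Submodule.span ℝ {v i} : Submodule ℝ (EuclideanSpace ℝ (Fin d))) := by
        rw [hSdef]
        apply convexHull_min ?_ (Submodule.span ℝ {v i}).convex
        rintro x ⟨j, rfl⟩
        rw [hpts]
        split
        · exact Submodule.mem_span_singleton_self _
        · exact Submodule.smul_mem _ _ (Submodule.mem_span_singleton_self _)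
      have hAle : affineSpan ℝ S ≤ (Submodule.span ℝ {v i}).toAffineSubspace :=
        affineSpan_le.mpr hsub
      rw [mem_intrinsicInterior]
      refine ⟨⟨0, subset_affineSpan ℝ _ h0S⟩, ?_, rfl⟩
      rw [mem_interior_iff_mem_nhds]
      have hball : Metric.ball (0 : EuclideanSpace ℝ (Fin d)) ‖v i‖ ∈
          nhds (0 : EuclideanSpace ℝ (Fin d)) :=
        Metric.ball_mem_nhds _ (norm_pos_iff.mpr hvi)
      have hpre : (Subtype.val : affineSpan ℝ S → EuclideanSpace ℝ (Fin d)) ⁻¹'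
          (Metric.ball 0 ‖v i‖) ∈ nhds (⟨0, subset_affineSpan ℝ _ h0S⟩ : affineSpan ℝ S) :=
        ContinuousAt.preimage_mem_nhds continuous_subtype_val.continuousAt (by simpa using hball)
      refine Filter.mem_of_superset hpre ?_
      rintro ⟨x, hxA⟩ hx
      have hxspan : x ∈ Submodule.span ℝ {v i} := hAle hxA
      obtain ⟨t, rfl⟩ := Submodule.mem_span_singleton.mp hxspan
      have hxb : ‖t • v i‖ < ‖v i‖ := by
        simpa [dist_zero_right] using hx
      rw [norm_smul, Real.norm_eq_abs] at hxb
      have htlt : |t| ≤ 1 := by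
        nlinarith [norm_pos_iff.mpr hvi, abs_nonneg t]
      exact hseg (hmemseg t htlt)
  · -- the count
    rw [Nat.card_congr (Equiv.subtypeEquivRight hchar), Nat.card_eq_fintype_card,
      Fintype.card_subtype_or_disjoint _ _ ?disj]
    case disj =>
      rw [Pi.disjoint_iff]
      intro α
      rw [Prop.disjoint_iff]
      rintro ⟨hA, hB⟩
      exact hB 0 (hA 0)
    have hone : Fintype.card {α : (i : Fin (d + 1)) → Fin (n i) // ∀ i, (α i : ℕ) = 0} = 1 := by
      rw [Fintype.card_eq_one_iff]
      refine ⟨⟨fun i => ⟨0, by have := hn i; omega⟩, fun i => rfl⟩, ?_⟩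
      rintro ⟨β, hβ⟩
      apply Subtype.ext
      funext i
      exact Fin.ext (by simpa using hβ i)
    have hprod : Fintype.card {α : (i : Fin (d + 1)) → Fin (n i) // ∀ i, (α i : ℕ) ≠ 0}
        = ∏ i, (n i - 1) := by
      rw [Fintype.card_congr (Equiv.subtypePiEquivPi (p := fun i (j : Fin (n i)) => (j : ℕ) ≠ 0)), Fintype.card_pi]
      refine Finset.prod_congr rfl fun i _ => ?_
      have hone' : Fintype.card {j : Fin (n i) // (j : ℕ) = 0} = 1 := by
        rw [Fintype.card_eq_one_iff]
        refine ⟨⟨⟨0, Nat.lt_of_lt_of_le Nat.zero_lt_two (hn i)⟩, rfl⟩, ?_⟩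
        rintro ⟨j, hj⟩
        exact Subtype.ext (Fin.ext (by simpa using hj))
      calc Fintype.card {j : Fin (n i) // (j : ℕ) ≠ 0}
          = Fintype.card (Fin (n i)) - Fintype.card {j : Fin (n i) // (j : ℕ) = 0} :=
            Fintype.card_subtype_compl _
        _ = n i - 1 := by rw [hone', Fintype.card_fin]
    rw [hone, hprod]
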